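/- Let m, n, k, Δ be natural numbers with n ≥ k+1 and m ≥ Δ. If there exists p ∈ (0,1) such that (1 − p(1−p)^k)^{m−Δ} · C(m,Δ)² · C(n,k) · (n−k) < 1, where C(·,·) denotes the binomial coefficient, then there exists a (k,Δ)-deletion disjunct binary m×n matrix. -/

import Mathlib

/-- `u` is a subsequence of `v` (obtained by deleting coordinates, keeping order). -/
def IsSubseq {α : Type*} {a b : ℕ} (u : Fin a → α) (v : Fin b → α) : Prop :=
  ∃ f : Fin a → Fin b, StrictMono f ∧ ∀ i, u i = v (f i)

/-- Coordinate-wise OR of the columns of `A` indexed by `S`. -/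
noncomputable def orSum {m n : ℕ} (A : Fin m → Fin n → Bool) (S : Finset (Fin n)) :
    Fin m → Bool :=
  fun r => S.sup fun i => A r i

/-- `A` is `k`-separable: OR-sums of any two distinct subsets of at most `k` columns differ. -/
def Separable {m n : ℕ} (k : ℕ) (A : Fin m → Fin n → Bool) : Prop :=
  ∀ S₁ S₂ : Finset (Fin n), S₁.card ≤ k → S₂.card ≤ k → S₁ ≠ S₂ →
    orSum A S₁ ≠ orSum A S₂

/-- `A` is `(k, Δ)`-deletion separable: OR-sums of any two distinct subsets of at most `k`
columns have no common subsequence of length `m - Δ`. -/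
def DelSeparable {m n : ℕ} (k Δ : ℕ) (A : Fin m → Fin n → Bool) : Prop :=
  ∀ S₁ S₂ : Finset (Fin n), S₁.card ≤ k → S₂.card ≤ k → S₁ ≠ S₂ →
    ¬ ∃ w : Fin (m - Δ) → Bool, IsSubseq w (orSum A S₁) ∧ IsSubseq w (orSum A S₂)

/-- `A` is `(k, Δ)`-deletion disjunct: for any `k+1` distinct columns `i 0, i 1, …, i k`,
every length-`(m-Δ)` subsequence `u` of column `i 0` and every length-`(m-Δ)` subsequence `v`
of the OR of columns `i 1, …, i k` have a position `ℓ` with `u ℓ = 1` and `v ℓ = 0`. -/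
def DelDisjunct {m n : ℕ} (k Δ : ℕ) (A : Fin m → Fin n → Bool) : Prop :=
  ∀ i : Fin (k + 1) → Fin n, Function.Injective i →
    ∀ u v : Fin (m - Δ) → Bool,
      IsSubseq u (fun r => A r (i 0)) →
      IsSubseq v (fun r => Finset.univ.sup fun s : Fin k => A r (i s.succ)) →
      ∃ ℓ, u ℓ = true ∧ v ℓ = false


open Finset

noncomputable def wt (p : ℝ) (b : Bool) : ℝ := if b then p else 1 - p

lemma wt_nonneg {p : ℝ} (h0 : 0 < p) (h1 : p < 1) (b : Bool) : 0 ≤ wt p b := by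
  cases b <;> simp [wt] <;> linarith

lemma sum_wt (p : ℝ) : ∑ b : Bool, wt p b = 1 := by
  simp [wt]

lemma sum_mu (ι : Type*) [Fintype ι] [DecidableEq ι] (p : ℝ) :
    ∑ A : ι → Bool, ∏ i, wt p (A i) = 1 := by
  rw [← Fintype.prod_sum (fun _ : ι => wt p)]
  have h1 : wt p true + wt p false = 1 := by simp [wt]
  simp [h1]

lemma sum_comp_inj {ι κ : Type*} [Fintype ι] [Fintype κ] [DecidableEq ι] [DecidableEq κ]
    (e : κ → ι) (he : Function.Injective e) (G : (κ → Bool) → ℝ) (p : ℝ) :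
    ∑ A : ι → Bool, G (A ∘ e) * ∏ i, wt p (A i)
      = ∑ B : κ → Bool, G B * ∏ j, wt p (B j) := by
  classical
  let σ : κ ⊕ ↥(Set.range e)ᶜ ≃ ι :=
    (Equiv.sumCongr (Equiv.ofInjective e he) (Equiv.refl _)).trans (Equiv.Set.sumCompl _)
  have hσl : ∀ j, σ (Sum.inl j) = e j := fun j => by
    simp [σ, Equiv.Set.sumCompl_apply_inl]
  let Φ : ((κ → Bool) × (↥(Set.range e)ᶜ → Bool)) ≃ (ι → Bool) :=
    (Equiv.sumArrowEquivProdArrow κ _ Bool).symm.trans (Equiv.arrowCongr σ (Equiv.refl Bool))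
  have hΦ : ∀ (x : (κ → Bool) × (↥(Set.range e)ᶜ → Bool)) (y : κ ⊕ ↥(Set.range e)ᶜ),
      Φ x (σ y) = Sum.elim x.1 x.2 y := by
    intro x y
    simp [Φ, Equiv.arrowCongr, Equiv.sumArrowEquivProdArrow]
  rw [← Equiv.sum_comp Φ (fun A => G (A ∘ e) * ∏ i, wt p (A i))]
  have step : ∀ x : (κ → Bool) × (↥(Set.range e)ᶜ → Bool),
      G (Φ x ∘ e) * ∏ i, wt p (Φ x i)
        = (G x.1 * ∏ j, wt p (x.1 j)) * ∏ c, wt p (x.2 c) := by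
    intro x
    have h1 : Φ x ∘ e = x.1 := by
      funext j
      have := hΦ x (Sum.inl j)
      rw [hσl] at this
      simpa using this
    have h2 : ∏ i, wt p (Φ x i) = (∏ j, wt p (x.1 j)) * ∏ c, wt p (x.2 c) := by
      rw [← Equiv.prod_comp σ (fun i => wt p (Φ x i))]
      simp only [hΦ]
      rw [Fintype.prod_sum_type]
      simp
    rw [h1, h2]; ring
  simp only [step]
  rw [Fintype.sum_prod_type]
  simp only [← Finset.sum_mul]
  rw [← Finset.sum_mul_sum]
  rw [sum_mu _ p, mul_one]

lemma sum_pi_indicator (L K : ℕ) (Q : (Fin K → Bool) → Prop) [DecidablePred Q] (p : ℝ) :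
    ∑ B : (Fin L × Fin K) → Bool,
        (if ∀ ℓ, Q (fun j => B (ℓ, j)) then (1:ℝ) else 0) * ∏ x, wt p (B x)
      = (∑ C : Fin K → Bool, (if Q C then (1:ℝ) else 0) * ∏ j, wt p (C j)) ^ L := by
  classical
  rw [← Equiv.sum_comp (Equiv.curry (Fin L) (Fin K) Bool).symm
    (fun B => (if ∀ ℓ, Q (fun j => B (ℓ, j)) then (1:ℝ) else 0) * ∏ x, wt p (B x))]
  have step : ∀ D : Fin L → Fin K → Bool,
      (if ∀ ℓ, Q (fun j => (Equiv.curry (Fin L) (Fin K) Bool).symm D (ℓ, j)) then (1:ℝ) else 0)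
          * ∏ x : Fin L × Fin K, wt p ((Equiv.curry (Fin L) (Fin K) Bool).symm D x)
        = ∏ ℓ, ((if Q (D ℓ) then (1:ℝ) else 0) * ∏ j, wt p (D ℓ j)) := by
    intro D
    rw [Finset.prod_mul_distrib, Fintype.prod_boole, Fintype.prod_prod_type]
    simp [Equiv.curry]
    by_cases hQ : ∀ ℓ, Q (D ℓ) <;> simp [hQ]
  simp only [step]
  rw [← Fintype.prod_sum (fun (ℓ : Fin L) (C : Fin K → Bool) =>
    (if Q C then (1:ℝ) else 0) * ∏ j, wt p (C j))]
  simp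

lemma sum_bad_row (k : ℕ) (p : ℝ) :
    ∑ C : Fin (k+1) → Bool,
        (if ¬(C 0 = true ∧ ∀ s : Fin k, C s.succ = false) then (1:ℝ) else 0) * ∏ j, wt p (C j)
      = 1 - p * (1 - p)^k := by
  classical
  have hchar : ∀ C : Fin (k+1) → Bool,
      (C 0 = true ∧ ∀ s : Fin k, C s.succ = false) ↔ C = (fun j => decide (j = 0)) := by
    intro C
    constructor
    · rintro ⟨h0, hs⟩
      funext j
      induction j using Fin.cases with
      | zero => simpa using h0
      | succ s => simp [hs s, Fin.succ_ne_zero]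
    · rintro rfl
      refine ⟨by simp, fun s => by simp [Fin.succ_ne_zero]⟩
  have hsplit : ∀ C : Fin (k+1) → Bool,
      (if ¬(C 0 = true ∧ ∀ s : Fin k, C s.succ = false) then (1:ℝ) else 0) * ∏ j, wt p (C j)
        = ∏ j, wt p (C j)
          - (if C = (fun j => decide (j = 0)) then (∏ j, wt p (C j)) else 0) := by
    intro C
    by_cases hC : C 0 = true ∧ ∀ s : Fin k, C s.succ = false
    · rw [if_neg (not_not_intro hC), if_pos ((hchar C).1 hC)]; ring
    · rw [if_pos hC, if_neg (fun h => hC ((hchar C).2 h))]; ring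
  simp only [hsplit]
  rw [Finset.sum_sub_distrib]
  have h1 : ∑ C : Fin (k+1) → Bool, ∏ j, wt p (C j) = 1 := by
    rw [← Fintype.prod_sum (fun _ : Fin (k+1) => wt p)]
    have h1 : wt p true + wt p false = 1 := by simp [wt]
    simp [h1]
  rw [h1]
  rw [Finset.sum_ite_eq' Finset.univ (fun j : Fin (k+1) => decide (j = 0))
    (fun C => ∏ j, wt p (C j))]
  simp [Fin.prod_univ_succ, wt, Fin.succ_ne_zero]

instance {L M : ℕ} : DecidablePred (StrictMono : (Fin L → Fin M) → Prop) :=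
  fun f => decidable_of_iff (∀ a b : Fin L, a < b → f a < f b)
    ⟨fun h a b hab => h a b hab, fun h a b hab => h hab⟩

lemma strictMono_eq_of_image_eq {L M : ℕ} {f g : Fin L → Fin M} (hf : StrictMono f)
    (hg : StrictMono g) (h : image f univ = image g univ) : f = g := by
  have hs : (image f univ).card = L := by
    rw [Finset.card_image_of_injective _ hf.injective, card_univ, Fintype.card_fin]
  have h1 : f = (image f univ).orderEmbOfFin hs :=
    Finset.orderEmbOfFin_unique hs (fun x => Finset.mem_image_of_mem f (mem_univ x)) hf
  have h2 : g = (image f univ).orderEmbOfFin hs :=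
    Finset.orderEmbOfFin_unique hs (fun x => h ▸ Finset.mem_image_of_mem g (mem_univ x)) hg
  rw [h1, h2]

lemma card_strictMono (L M : ℕ) :
    (univ.filter (fun f : Fin L → Fin M => StrictMono f)).card = M.choose L := by
  classical
  rw [show M.choose L = (Finset.powersetCard L (univ : Finset (Fin M))).card by
    rw [Finset.card_powersetCard, card_univ, Fintype.card_fin]]
  apply Finset.card_bij (fun f _ => image f univ)
  · intro f hf
    rw [Finset.mem_powersetCard_univ, Finset.card_image_of_injective _
      ((Finset.mem_filter.1 hf).2).injective, card_univ, Fintype.card_fin]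
  · intro f hf g hg hfg
    exact strictMono_eq_of_image_eq (Finset.mem_filter.1 hf).2 (Finset.mem_filter.1 hg).2 hfg
  · intro s hs
    have hcard : s.card = L := Finset.mem_powersetCard_univ.1 hs
    refine ⟨fun x => s.orderEmbOfFin hcard x, Finset.mem_filter.2
      ⟨mem_univ _, (s.orderEmbOfFin hcard).strictMono⟩, ?_⟩
    apply Finset.coe_injective
    rw [Finset.coe_image, Finset.coe_univ, Set.image_univ]
    exact Finset.range_orderEmbOfFin s hcard

lemma card_colchoice (n k : ℕ) :
    (univ.filter (fun x : Fin n × (Fin k → Fin n) => StrictMono x.2 ∧ ∀ s, x.2 s ≠ x.1)).card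
      = n.choose k * (n - k) := by
  classical
  rw [Finset.card_eq_sum_card_fiberwise
    (f := fun x : Fin n × (Fin k → Fin n) => x.2)
    (t := univ.filter (fun c : Fin k → Fin n => StrictMono c))
    (fun x hx => Finset.mem_filter.2 ⟨mem_univ _, (Finset.mem_filter.1 hx).2.1⟩)]
  have hfiber : ∀ c ∈ univ.filter (fun c : Fin k → Fin n => StrictMono c),
      ((univ.filter (fun x : Fin n × (Fin k → Fin n) => StrictMono x.2 ∧ ∀ s, x.2 s ≠ x.1)).filter
        (fun x => x.2 = c)).card = n - k := by
    intro c hc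
    have hc' : StrictMono c := (Finset.mem_filter.1 hc).2
    have heq : (univ.filter (fun x : Fin n × (Fin k → Fin n) =>
        StrictMono x.2 ∧ ∀ s, x.2 s ≠ x.1)).filter (fun x => x.2 = c)
        = ((image c univ)ᶜ).image (fun i0 => (i0, c)) := by
      ext ⟨i0, d⟩
      constructor
      · intro hx
        obtain ⟨hx1, hx2⟩ := Finset.mem_filter.1 hx
        obtain ⟨-, hmono, hne⟩ := Finset.mem_filter.1 hx1
        simp only at hx2
        subst hx2
        refine Finset.mem_image.2 ⟨i0, Finset.mem_compl.2 fun hmem => ?_, rfl⟩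
        obtain ⟨s, -, hs⟩ := Finset.mem_image.1 hmem
        exact hne s hs
      · intro hx
        obtain ⟨i0', hi0', heq'⟩ := Finset.mem_image.1 hx
        obtain ⟨rfl, rfl⟩ : i0' = i0 ∧ c = d := by
          exact ⟨congrArg Prod.fst heq', congrArg Prod.snd heq'⟩
        refine Finset.mem_filter.2 ⟨Finset.mem_filter.2 ⟨mem_univ _, hc', fun s hs => ?_⟩, rfl⟩
        exact (Finset.mem_compl.1 hi0') (Finset.mem_image.2 ⟨s, mem_univ _, hs⟩)
    rw [heq, Finset.card_image_of_injective _
        (fun a b hab => by simpa using congrArg Prod.fst hab),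
      Finset.card_compl, Finset.card_image_of_injective _ hc'.injective, card_univ,
      Fintype.card_fin, Fintype.card_fin]
  rw [Finset.sum_congr rfl hfiber, Finset.sum_const, _root_.card_strictMono, smul_eq_mul]

lemma tuple_sum {m n k L : ℕ} (p : ℝ)
    (i0 : Fin n) (c : Fin k → Fin n) (f g : Fin L → Fin m)
    (hc : StrictMono c) (hci : ∀ s, c s ≠ i0) (hf : StrictMono f) (hg : StrictMono g) :
    ∑ B : (Fin m × Fin n) → Bool,
      (if ∀ ℓ : Fin L, ¬(B (f ℓ, i0) = true ∧ ∀ s : Fin k, B (g ℓ, c s) = false)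
        then (1:ℝ) else 0) * ∏ x, wt p (B x)
      = (1 - p * (1-p)^k) ^ L := by
  classical
  set e : (Fin L × Fin (k+1)) → Fin m × Fin n :=
    fun x => Fin.cases (f x.1, i0) (fun s => (g x.1, c s)) x.2 with he_def
  have he0 : ∀ ℓ, e (ℓ, 0) = (f ℓ, i0) := fun ℓ => rfl
  have hes : ∀ ℓ s, e (ℓ, Fin.succ s) = (g ℓ, c s) := fun ℓ s => by
    simp [he_def]
  have he : Function.Injective e := by
    rintro ⟨ℓ₁, j₁⟩ ⟨ℓ₂, j₂⟩ hx
    induction j₁ using Fin.cases with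
    | zero =>
      induction j₂ using Fin.cases with
      | zero =>
        rw [he0, he0] at hx
        have : f ℓ₁ = f ℓ₂ := congrArg Prod.fst hx
        rw [hf.injective this]
      | succ s₂ =>
        rw [he0, hes] at hx
        exact absurd (congrArg Prod.snd hx).symm (hci s₂)
    | succ s₁ =>
      induction j₂ using Fin.cases with
      | zero =>
        rw [hes, he0] at hx
        exact absurd (congrArg Prod.snd hx) (hci s₁)
      | succ s₂ =>
        rw [hes, hes] at hx
        have h1 : g ℓ₁ = g ℓ₂ := congrArg Prod.fst hx
        have h2 : c s₁ = c s₂ := congrArg Prod.snd hx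
        rw [hg.injective h1, hc.injective h2]
  have hcond : ∀ B : (Fin m × Fin n) → Bool,
      (∀ ℓ : Fin L, ¬(B (f ℓ, i0) = true ∧ ∀ s : Fin k, B (g ℓ, c s) = false))
        ↔ (∀ ℓ : Fin L, ¬((B ∘ e) (ℓ, 0) = true ∧ ∀ s : Fin k, (B ∘ e) (ℓ, Fin.succ s) = false)) := by
    intro B
    apply forall_congr'
    intro ℓ
    simp only [Function.comp_apply, he0, hes]
  have step1 : ∀ B : (Fin m × Fin n) → Bool,
      (if ∀ ℓ : Fin L, ¬(B (f ℓ, i0) = true ∧ ∀ s : Fin k, B (g ℓ, c s) = false)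
        then (1:ℝ) else 0) * ∏ x, wt p (B x)
      = (fun D : Fin L × Fin (k+1) → Bool =>
          (if ∀ ℓ : Fin L, ¬(D (ℓ, 0) = true ∧ ∀ s : Fin k, D (ℓ, Fin.succ s) = false)
            then (1:ℝ) else 0)) (B ∘ e) * ∏ x, wt p (B x) := by
    intro B
    exact congrArg (· * ∏ x, wt p (B x)) (if_congr (hcond B) rfl rfl)
  rw [Finset.sum_congr rfl (fun B _ => step1 B),
    sum_comp_inj e he (fun D : Fin L × Fin (k+1) → Bool =>
      (if ∀ ℓ : Fin L, ¬(D (ℓ, 0) = true ∧ ∀ s : Fin k, D (ℓ, Fin.succ s) = false)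
        then (1:ℝ) else 0)) p]
  have step2 := sum_pi_indicator L (k+1)
    (fun C : Fin (k+1) → Bool => ¬(C 0 = true ∧ ∀ s : Fin k, C (Fin.succ s) = false)) p
  rw [step2, sum_bad_row]

lemma cover {m n k Δ : ℕ} (B : (Fin m × Fin n) → Bool)
    (hbad : ¬ DelDisjunct k Δ (fun r c => B (r, c))) :
    ∃ (i0 : Fin n) (c : Fin k → Fin n) (f g : Fin (m - Δ) → Fin m),
      StrictMono c ∧ (∀ s, c s ≠ i0) ∧ StrictMono f ∧ StrictMono g ∧
      ∀ ℓ : Fin (m - Δ), ¬(B (f ℓ, i0) = true ∧ ∀ s : Fin k, B (g ℓ, c s) = false) := by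
  classical
  simp only [DelDisjunct, not_forall] at hbad
  obtain ⟨i, hi, u, v, hu, hv, hne⟩ := hbad
  push_neg at hne
  obtain ⟨f, hf, huf⟩ := hu
  obtain ⟨g, hg, hvg⟩ := hv
  have hinj : Function.Injective (fun s : Fin k => i s.succ) := by
    intro s t hst
    exact Fin.succ_injective k (hi hst)
  set S : Finset (Fin n) := image (fun s : Fin k => i s.succ) univ with hS_def
  have hS : S.card = k := by
    rw [hS_def, Finset.card_image_of_injective _ hinj, card_univ, Fintype.card_fin]
  refine ⟨i 0, fun s => S.orderEmbOfFin hS s, f, g, (S.orderEmbOfFin hS).strictMono,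
    fun s hcs => ?_, hf, hg, ?_⟩
  · have hmem : S.orderEmbOfFin hS s ∈ S := Finset.orderEmbOfFin_mem S hS s
    simp only at hcs
    rw [hcs] at hmem
    obtain ⟨s', -, hs'⟩ := Finset.mem_image.1 hmem
    exact Fin.succ_ne_zero s' (hi hs')
  · intro ℓ hcontra
    obtain ⟨h1, h2⟩ := hcontra
    have hu1 : u ℓ = true := by rw [huf ℓ]; exact h1
    have hv0 : v ℓ = false := by
      rw [hvg ℓ]
      have : ∀ s : Fin k, B (g ℓ, i s.succ) = false := by
        intro s
        have hmem : i s.succ ∈ S := Finset.mem_image.2 ⟨s, mem_univ _, rfl⟩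
        have : i s.succ ∈ Set.range (S.orderEmbOfFin hS) := by
          rw [Finset.range_orderEmbOfFin]; exact hmem
        obtain ⟨s', hs'⟩ := this
        rw [← hs']
        exact h2 s'
      simp only
      rw [show (false : Bool) = ⊥ from rfl, Finset.sup_eq_bot_iff]
      intro s _
      exact this s
    have := hne ℓ hu1
    exact this hv0

/-- If for some `p ∈ (0,1)` the union bound
`(1 - p(1-p)^k)^(m-Δ) · C(m,Δ)² · C(n,k) · (n-k)` is less than `1` (with `n ≥ k+1`,
`m ≥ Δ`), then a `(k, Δ)`-deletion disjunct binary `m × n` matrix exists. -/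
theorem exists_deletion_disjunct_of_probabilistic_bound
    (m n k Δ : ℕ) (hn : k + 1 ≤ n) (hm : Δ ≤ m)
    (h : ∃ p : ℝ, 0 < p ∧ p < 1 ∧
      (1 - p * (1 - p) ^ k) ^ (m - Δ) * (m.choose Δ : ℝ) ^ 2 *
        (n.choose k : ℝ) * ((n - k : ℕ) : ℝ) < 1) :
    ∃ A : Fin m → Fin n → Bool, DelDisjunct k Δ A := by
  classical
  obtain ⟨p, hp0, hp1, hlt⟩ := h
  by_contra hA
  push_neg at hA
  set q : ℝ := 1 - p * (1 - p) ^ k with hq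
  set T : Finset ((Fin n × (Fin k → Fin n)) × ((Fin (m - Δ) → Fin m) × (Fin (m - Δ) → Fin m))) :=
    (univ.filter fun x : Fin n × (Fin k → Fin n) => StrictMono x.2 ∧ ∀ s, x.2 s ≠ x.1) ×ˢ
      ((univ.filter fun f : Fin (m - Δ) → Fin m => StrictMono f) ×ˢ
       (univ.filter fun g : Fin (m - Δ) → Fin m => StrictMono g)) with hT
  set ind : ((Fin n × (Fin k → Fin n)) × ((Fin (m - Δ) → Fin m) × (Fin (m - Δ) → Fin m))) →
      ((Fin m × Fin n) → Bool) → ℝ :=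
    fun t B => if ∀ ℓ : Fin (m - Δ), ¬(B (t.2.1 ℓ, t.1.1) = true ∧
      ∀ s : Fin k, B (t.2.2 ℓ, t.1.2 s) = false) then (1:ℝ) else 0 with hind
  have key : ∀ B : (Fin m × Fin n) → Bool, ∃ t ∈ T, ind t B = 1 := by
    intro B
    obtain ⟨i0, c, f, g, hc, hci, hf, hg, hcov⟩ := cover B (hA _)
    refine ⟨((i0, c), (f, g)), ?_, ?_⟩
    · rw [hT]
      refine Finset.mem_product.2 ⟨Finset.mem_filter.2 ⟨mem_univ _, hc, hci⟩,
        Finset.mem_product.2 ⟨Finset.mem_filter.2 ⟨mem_univ _, hf⟩,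
          Finset.mem_filter.2 ⟨mem_univ _, hg⟩⟩⟩
    · rw [hind]
      exact if_pos hcov
  have hμ : ∀ B : (Fin m × Fin n) → Bool, 0 ≤ ∏ x, wt p (B x) :=
    fun B => Finset.prod_nonneg (fun x _ => wt_nonneg hp0 hp1 _)
  have h2 : ∀ B : (Fin m × Fin n) → Bool,
      ∏ x, wt p (B x) ≤ (∑ t ∈ T, ind t B) * ∏ x, wt p (B x) := by
    intro B
    obtain ⟨t0, ht0, hind0⟩ := key B
    have hone : (1:ℝ) ≤ ∑ t ∈ T, ind t B := by
      calc (1:ℝ) = ind t0 B := hind0.symm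
        _ ≤ ∑ t ∈ T, ind t B := Finset.single_le_sum (f := fun t => ind t B)
            (fun t _ => by simp only [hind]; split <;> norm_num) ht0
    exact le_mul_of_one_le_left (hμ B) hone
  have h3 : (1:ℝ) ≤ ∑ B : (Fin m × Fin n) → Bool, (∑ t ∈ T, ind t B) * ∏ x, wt p (B x) := by
    rw [show (1:ℝ) = ∑ B : (Fin m × Fin n) → Bool, ∏ x, wt p (B x) from (sum_mu _ p).symm]
    exact Finset.sum_le_sum (fun B _ => h2 B)
  have h4 : ∑ B : (Fin m × Fin n) → Bool, (∑ t ∈ T, ind t B) * ∏ x, wt p (B x)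
      = ∑ t ∈ T, ∑ B : (Fin m × Fin n) → Bool, ind t B * ∏ x, wt p (B x) := by
    simp only [Finset.sum_mul]
    exact Finset.sum_comm
  have h5 : ∀ t ∈ T, ∑ B : (Fin m × Fin n) → Bool, ind t B * ∏ x, wt p (B x) = q ^ (m - Δ) := by
    rintro ⟨⟨i0, c⟩, f, g⟩ ht
    rw [hT] at ht
    obtain ⟨ht1, ht2⟩ := Finset.mem_product.1 ht
    obtain ⟨htf, htg⟩ := Finset.mem_product.1 ht2
    obtain ⟨-, hc, hci⟩ := Finset.mem_filter.1 ht1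
    exact tuple_sum p i0 c f g hc hci (Finset.mem_filter.1 htf).2 (Finset.mem_filter.1 htg).2
  have h6 : (1:ℝ) ≤ (T.card : ℝ) * q ^ (m - Δ) := by
    calc (1:ℝ) ≤ _ := h3
      _ = ∑ t ∈ T, q ^ (m - Δ) := by rw [h4]; exact Finset.sum_congr rfl h5
      _ = (T.card : ℝ) * q ^ (m - Δ) := by rw [Finset.sum_const, nsmul_eq_mul]
  have hcard : (T.card : ℝ) = (n.choose k : ℝ) * ((n - k : ℕ) : ℝ) * (m.choose Δ : ℝ) ^ 2 := by
    rw [hT, Finset.card_product, Finset.card_product, card_colchoice,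
      _root_.card_strictMono, Nat.choose_symm hm]
    push_cast
    ring
  rw [hcard] at h6
  nlinarith [h6, hlt]
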